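/- Let n ≥ 1 and 0 < η < 1. There exist a constant α = α(n, η) > 1 and a constant C = C(n, η) < ∞ with the following property. Let Δ ⊂ ℝⁿ be an axis-parallel cube, let u : ℝⁿ × (0, ∞) → ℝ be differentiable with ∫_{T(Δ)} |∇u(x,t)|² dx dt < ∞, and let 0 ≤ β < ∞. If for every axis-parallel subcube Q ⊂ Δ there exists an open set F ⊂ Q with |F| ≥ η·|Q| (Lebesgue measure in ℝⁿ) and ∫_{Ω_α(F) ∩ T(Q)} |∇u(x,t)|² · t dx dt ≤ β·|Q|, then ∫_{T(Δ)} |∇u(x,t)|² · t dx dt ≤ C·β·|Δ|. -/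

import Mathlib

open MeasureTheory Set

/-- The (closed) axis-parallel cube in `ℝⁿ` with center `c` and side length `l`. -/
def cube (n : ℕ) (c : EuclideanSpace ℝ (Fin n)) (l : ℝ) :
    Set (EuclideanSpace ℝ (Fin n)) :=
  {x | ∀ i, |x i - c i| ≤ l / 2}

/-- The Carleson region `T(Q) = {(x,t) : x ∈ Q, 0 < t < l(Q)}` over the cube with
center `c` and side length `l`. -/
def carlesonRegion (n : ℕ) (c : EuclideanSpace ℝ (Fin n)) (l : ℝ) :
    Set (EuclideanSpace ℝ (Fin n) × ℝ) :=
  {p | p.1 ∈ cube n c l ∧ 0 < p.2 ∧ p.2 < l}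

/-- The cone `Γ_α(P) = {(x,t) : t > 0, |x - P| < α t}` with vertex `P` and aperture `α`. -/
def cone (n : ℕ) (α : ℝ) (P : EuclideanSpace ℝ (Fin n)) :
    Set (EuclideanSpace ℝ (Fin n) × ℝ) :=
  {p | 0 < p.2 ∧ ‖p.1 - P‖ < α * p.2}

/-- The sawtooth region `Ω_α(F) = ⋃_{P ∈ F} Γ_α(P)`. -/
def sawtooth (n : ℕ) (α : ℝ) (F : Set (EuclideanSpace ℝ (Fin n))) :
    Set (EuclideanSpace ℝ (Fin n) × ℝ) :=
  ⋃ P ∈ F, cone n α P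

/-- The upper half space `ℝⁿ × (0, ∞)`. -/
def upperHalf (n : ℕ) : Set (EuclideanSpace ℝ (Fin n) × ℝ) := {p | 0 < p.2}

namespace STAux

noncomputable section

variable {n : ℕ}

abbrev Euc (n : ℕ) := EuclideanSpace ℝ (Fin n)

/-! ### Basic measurability and volume facts -/

lemma measurableSet_forall_mem {b : Fin n → Set ℝ} (hb : ∀ i, MeasurableSet (b i)) :
    MeasurableSet {x : Euc n | ∀ i, x i ∈ b i} := by
  have : {x : Euc n | ∀ i, x i ∈ b i} = ⋂ i, (fun x : Euc n => x i) ⁻¹' (b i) := by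
    ext x; simp
  rw [this]
  exact MeasurableSet.iInter fun i => ((measurable_pi_apply i).comp (WithLp.measurable_ofLp 2 (Fin n → ℝ))) (hb i)

lemma volume_forall_mem (b : Fin n → Set ℝ) (hb : ∀ i, MeasurableSet (b i)) :
    volume {x : Euc n | ∀ i, x i ∈ b i} = ∏ i, volume (b i) := by
  have e := EuclideanSpace.volume_preserving_symm_measurableEquiv_toLp (Fin n)
  have h : {x : Euc n | ∀ i, x i ∈ b i}
      = ((MeasurableEquiv.toLp 2 (Fin n → ℝ)).symm) ⁻¹' (Set.pi univ b) := by
    ext x; simp [Set.mem_pi]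
  rw [h, e.measure_preimage ((MeasurableSet.univ_pi hb).nullMeasurableSet)]
  exact volume_pi_pi b

lemma cube_eq (c : Euc n) (l : ℝ) :
    cube n c l = {x : Euc n | ∀ i, x i ∈ Icc (c i - l / 2) (c i + l / 2)} := by
  ext x
  simp only [cube, mem_setOf_eq, mem_Icc]
  refine forall_congr' fun i => ?_
  rw [abs_le]
  constructor <;> intro h <;> constructor <;> linarith [h.1, h.2]

lemma measurableSet_cube (c : Euc n) (l : ℝ) : MeasurableSet (cube n c l) := by
  rw [cube_eq]; exact measurableSet_forall_mem fun i => measurableSet_Icc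

lemma volume_cube (c : Euc n) {l : ℝ} (hl : 0 ≤ l) :
    volume (cube n c l) = ENNReal.ofReal l ^ n := by
  rw [cube_eq, volume_forall_mem _ fun i => measurableSet_Icc]
  have : ∀ i : Fin n, volume (Icc (c i - l / 2) (c i + l / 2)) = ENNReal.ofReal l := by
    intro i; rw [Real.volume_Icc]; congr 1; ring
  simp [this, Finset.prod_const]

lemma volume_cube_toReal (c : Euc n) {l : ℝ} (hl : 0 ≤ l) :
    (volume (cube n c l)).toReal = l ^ n := by
  rw [volume_cube c hl, ← ENNReal.ofReal_pow hl, ENNReal.toReal_ofReal (by positivity)]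

lemma measurableSet_carlesonRegion (c : Euc n) (l : ℝ) :
    MeasurableSet (carlesonRegion n c l) := by
  have : carlesonRegion n c l = (cube n c l) ×ˢ (Ioo 0 l) := by
    ext p; simp [carlesonRegion, Set.mem_prod]
  rw [this]
  exact (measurableSet_cube c l).prod measurableSet_Ioo

lemma isOpen_sawtooth (α : ℝ) (F : Set (Euc n)) : IsOpen (sawtooth n α F) := by
  refine isOpen_biUnion fun P _ => ?_
  have h1 : IsOpen {p : Euc n × ℝ | 0 < p.2} := isOpen_lt continuous_const continuous_snd
  have h2 : IsOpen {p : Euc n × ℝ | ‖p.1 - P‖ < α * p.2} :=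
    isOpen_lt ((continuous_fst.sub continuous_const).norm) (continuous_const.mul continuous_snd)
  exact h1.inter h2

/-! ### Cells -/

/-- corner of the cube with center `c`, side `l` -/
def corner (c : Euc n) (l : ℝ) : Euc n := WithLp.toLp 2 (fun i => c i - l / 2 : Fin n → ℝ)

/-- size of generation-`j` cells -/
def sgen (l : ℝ) (j : ℕ) : ℝ := l / 2 ^ j

lemma sgen_pos {l : ℝ} (hl : 0 < l) (j : ℕ) : 0 < sgen l j := by
  have : (0:ℝ) < 2 ^ j := by positivity
  exact div_pos hl this

lemma sgen_succ (l : ℝ) (j : ℕ) : sgen l j = 2 * sgen l (j + 1) := by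
  rw [sgen, sgen, pow_succ]
  field_simp

lemma sgen_zero (l : ℝ) : sgen l 0 = l := by simp [sgen]

lemma sgen_anti {l : ℝ} (hl : 0 < l) {j j' : ℕ} (h : j ≤ j') : sgen l j' ≤ sgen l j := by
  apply div_le_div_of_nonneg_left hl.le (by positivity)
  exact pow_le_pow_right₀ one_le_two h

/-- index of the cell of size `s` (relative to corner `a`) containing `x` -/
def idx (a : Euc n) (s : ℝ) (x : Euc n) : Fin n → ℤ := fun i => ⌊(x i - a i) / s⌋

/-- the half-open cell with corner `a`, size `s`, index `k` -/
def cell (a : Euc n) (s : ℝ) (k : Fin n → ℤ) : Set (Euc n) :=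
  {x | ∀ i, a i + k i * s ≤ x i ∧ x i < a i + (k i + 1) * s}

lemma mem_cell_iff {a : Euc n} {s : ℝ} (hs : 0 < s) {k : Fin n → ℤ} {x : Euc n} :
    x ∈ cell a s k ↔ idx a s x = k := by
  simp only [cell, idx, Set.mem_setOf_eq, funext_iff]
  refine forall_congr' fun i => ?_
  rw [Int.floor_eq_iff]
  constructor
  · rintro ⟨h1, h2⟩
    constructor
    · rw [le_div_iff₀ hs]; linarith
    · rw [div_lt_iff₀ hs]; linarith
  · rintro ⟨h1, h2⟩
    rw [le_div_iff₀ hs] at h1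
    rw [div_lt_iff₀ hs] at h2
    constructor <;> linarith

lemma measurableSet_cell (a : Euc n) (s : ℝ) (k : Fin n → ℤ) :
    MeasurableSet (cell a s k) := by
  have : cell a s k
      = {x : Euc n | ∀ i, x i ∈ Ico (a i + k i * s) (a i + (k i + 1) * s)} := by
    ext x; simp [cell, mem_Ico]
  rw [this]
  exact measurableSet_forall_mem fun i => measurableSet_Ico

lemma volume_cell (a : Euc n) {s : ℝ} (hs : 0 ≤ s) (k : Fin n → ℤ) :
    volume (cell a s k) = ENNReal.ofReal s ^ n := by
  have h : cell a s k
      = {x : Euc n | ∀ i, x i ∈ Ico (a i + k i * s) (a i + (k i + 1) * s)} := by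
    ext x; simp [cell, mem_Ico]
  rw [h, volume_forall_mem _ fun i => measurableSet_Ico]
  have : ∀ i : Fin n, volume (Ico (a i + k i * s) (a i + (k i + 1) * s))
      = ENNReal.ofReal s := by
    intro i; rw [Real.volume_Ico]; congr 1; ring
  simp [this, Finset.prod_const]

lemma floor_half_int (r : ℝ) : ⌊r / 2⌋ = ⌊r⌋ / 2 := by
  have h0 : (⌊r⌋ : ℝ) ≤ r := Int.floor_le r
  have h1 : r < ⌊r⌋ + 1 := Int.lt_floor_add_one r
  have h2 : 2 * (⌊r⌋ / 2) ≤ ⌊r⌋ ∧ ⌊r⌋ ≤ 2 * (⌊r⌋ / 2) + 1 := by omega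
  have c1 : ((2 * (⌊r⌋ / 2) : ℤ) : ℝ) ≤ (⌊r⌋ : ℝ) := by exact_mod_cast h2.1
  have c2 : ((⌊r⌋ : ℤ) : ℝ) ≤ ((2 * (⌊r⌋ / 2) + 1 : ℤ) : ℝ) := by exact_mod_cast h2.2
  refine Int.floor_eq_iff.2 ⟨?_, ?_⟩ <;> push_cast at c1 c2 ⊢ <;> linarith

/-- parent index -/
def pidx (k : Fin n → ℤ) : Fin n → ℤ := fun i => k i / 2

lemma idx_double (a : Euc n) (s : ℝ) (x : Euc n) :
    idx a (2 * s) x = pidx (idx a s x) := by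
  funext i
  simp only [idx, pidx]
  rw [← floor_half_int ((x i - a i) / s), div_div, mul_comm]

lemma idx_iterate (a : Euc n) {l : ℝ} (x : Euc n) (j d : ℕ) :
    idx a (sgen l j) x = (pidx^[d]) (idx a (sgen l (j + d)) x) := by
  induction d generalizing j with
  | zero => rfl
  | succ d ih =>
    have h1 : idx a (sgen l j) x = pidx^[d] (idx a (sgen l (j + d)) x) := ih j
    rw [h1, sgen_succ l (j + d), idx_double, Function.iterate_succ_apply]
    rfl

lemma idx_coarse {a : Euc n} {l : ℝ} {x y : Euc n} {j j' : ℕ} (h : j ≤ j')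
    (hxy : idx a (sgen l j') x = idx a (sgen l j') y) :
    idx a (sgen l j) x = idx a (sgen l j) y := by
  obtain ⟨d, rfl⟩ := Nat.exists_eq_add_of_le h
  rw [idx_iterate a x j d, idx_iterate a y j d, hxy]

lemma dist_of_idx_eq {a : Euc n} {s : ℝ} (hs : 0 < s) {x y : Euc n}
    (h : idx a s x = idx a s y) : ‖x - y‖ ≤ Real.sqrt n * s := by
  have hcoord : ∀ i, |x i - y i| ≤ s := by
    intro i
    have hx : x ∈ cell a s (idx a s x) := (mem_cell_iff hs).2 rfl
    have hy : y ∈ cell a s (idx a s x) := (mem_cell_iff hs).2 h.symm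
    have h1 := hx i
    have h2 := hy i
    rw [abs_le]
    constructor <;> linarith [h1.1, h1.2, h2.1, h2.2]
  rw [EuclideanSpace.norm_eq]
  have hb : ∀ i : Fin n, ‖(x - y) i‖ ^ 2 ≤ s ^ 2 := by
    intro i
    have he : (x - y) i = x i - y i := rfl
    rw [he, Real.norm_eq_abs, sq_abs]
    exact sq_le_sq' (by linarith [(abs_le.1 (hcoord i)).1]) (abs_le.1 (hcoord i)).2
  calc Real.sqrt (∑ i, ‖(x - y) i‖ ^ 2) ≤ Real.sqrt (∑ _i : Fin n, s ^ 2) :=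
        Real.sqrt_le_sqrt (Finset.sum_le_sum fun i _ => hb i)
    _ = Real.sqrt n * s := by
        rw [Finset.sum_const, Finset.card_univ, Fintype.card_fin, nsmul_eq_mul,
          Real.sqrt_mul (by positivity), Real.sqrt_sq hs.le]

/-- center of a cell -/
def ctr (a : Euc n) (s : ℝ) (k : Fin n → ℤ) : Euc n :=
  WithLp.toLp 2 (fun i => a i + k i * s + s / 2 : Fin n → ℝ)

lemma cell_subset_cube {a : Euc n} {s : ℝ} (k : Fin n → ℤ) :
    cell a s k ⊆ cube n (ctr a s k) s := by
  intro x hx i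
  have h := hx i
  have hc : ctr a s k i = a i + k i * s + s / 2 := rfl
  rw [hc, abs_le]
  constructor <;> push_cast <;> [linarith [h.1]; linarith [h.2]]

lemma cube_of_cell_subset {c : Euc n} {l s : ℝ} {j : ℕ} (hl : 0 < l)
    (hs : s = sgen l j) {k : Fin n → ℤ} (hk : ∀ i, 0 ≤ k i ∧ k i + 1 ≤ 2 ^ j) :
    cube n (ctr (corner c l) s k) s ⊆ cube n c l := by
  have hspos : 0 < s := hs ▸ sgen_pos hl j
  have hsl : (2 ^ j : ℝ) * s = l := by
    rw [hs, sgen]; field_simp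
  intro x hx i
  have h := hx i
  have hc : ctr (corner c l) s k i = (c i - l / 2) + k i * s + s / 2 := rfl
  rw [hc, abs_le] at h
  have hk1 : (0:ℝ) ≤ (k i : ℝ) := by exact_mod_cast (hk i).1
  have hk2 : ((k i : ℝ) + 1) ≤ (2 ^ j : ℝ) := by exact_mod_cast (hk i).2
  have hub : (k i : ℝ) * s + s ≤ l := by
    calc (k i : ℝ) * s + s = ((k i : ℝ) + 1) * s := by ring
      _ ≤ (2 ^ j : ℝ) * s := by nlinarith
      _ = l := hsl
  rw [abs_le]
  constructor <;> nlinarith [h.1, h.2]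


/-! ### More geometry -/

lemma hyperplane_null (i : Fin n) (v : ℝ) : volume {x : Euc n | x i = v} = 0 := by
  have h : {x : Euc n | x i = v}
      = {x : Euc n | ∀ i', x i' ∈ (if i' = i then ({v} : Set ℝ) else univ)} := by
    ext x
    constructor
    · intro hx i'
      by_cases h' : i' = i <;> simp [h']
      exact hx
    · intro hx
      have := hx i
      simpa using this
  rw [h, volume_forall_mem]
  · exact Finset.prod_eq_zero (Finset.mem_univ i) (by simp)
  · intro i'
    by_cases h' : i' = i <;> simp [h']

lemma volume_cube_diff_base (c : Euc n) {l : ℝ} (hl : 0 < l) :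
    volume (cube n c l \ cell (corner c l) (sgen l 0) 0) = 0 := by
  have hsub : cube n c l \ cell (corner c l) (sgen l 0) 0
      ⊆ ⋃ i : Fin n, {x : Euc n | x i = c i + l / 2} := by
    rintro x ⟨hx, hnx⟩
    simp only [cell, sgen_zero, mem_setOf_eq, not_forall] at hnx
    obtain ⟨i, hi⟩ := hnx
    refine mem_iUnion.2 ⟨i, ?_⟩
    have h1 := abs_le.1 (hx i)
    have hc : corner c l i = c i - l / 2 := rfl
    rw [hc] at hi
    rw [not_and_or] at hi
    rcases hi with hi | hi
    · push_neg at hi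
      simp only [Pi.zero_apply, Int.cast_zero, zero_mul, add_zero] at hi
      exfalso; linarith [h1.1]
    · push_neg at hi
      simp only [Pi.zero_apply, Int.cast_zero, zero_add, one_mul] at hi
      show x i = c i + l / 2
      have : c i + l / 2 ≤ x i := by linarith
      linarith [h1.2]
  refine measure_mono_null hsub (measure_iUnion_null fun i => hyperplane_null i _)

lemma length_le_of_cube_subset {c c' : Euc n} {l l' : ℝ} (hn : 1 ≤ n) (hl : 0 < l)
    (hsub : cube n c l ⊆ cube n c' l') : l ≤ l' := by
  have i : Fin n := ⟨0, hn⟩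
  set xp : Euc n := WithLp.toLp 2 (fun i' => if i' = i then c i + l / 2 else c i' : Fin n → ℝ) with hxpdef
  set xm : Euc n := WithLp.toLp 2 (fun i' => if i' = i then c i - l / 2 else c i' : Fin n → ℝ) with hxmdef
  have hxp : xp ∈ cube n c l := by
    intro i'
    show |xp i' - c i'| ≤ l / 2
    by_cases h' : i' = i
    · subst h'; simp only [hxpdef, WithLp.ofLp_toLp, if_pos rfl, if_true]
      rw [add_sub_cancel_left, abs_of_nonneg (by linarith)]
    · simp only [hxpdef, WithLp.ofLp_toLp, if_neg h', sub_self, abs_zero]; linarith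
  have hxm : xm ∈ cube n c l := by
    intro i'
    show |xm i' - c i'| ≤ l / 2
    by_cases h' : i' = i
    · subst h'; simp only [hxmdef, WithLp.ofLp_toLp, if_pos rfl, if_true]
      have : c i' - l / 2 - c i' = -(l/2) := by ring
      rw [this, abs_neg, abs_of_nonneg (by linarith)]
    · simp only [hxmdef, WithLp.ofLp_toLp, if_neg h', sub_self, abs_zero]; linarith
  have h1 := abs_le.1 (hsub hxp i)
  have h2 := abs_le.1 (hsub hxm i)
  have e1 : xp i = c i + l / 2 := by simp [hxpdef]
  have e2 : xm i = c i - l / 2 := by simp [hxmdef]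
  rw [e1] at h1
  rw [e2] at h2
  linarith [h1.2, h2.1]

lemma carleson_subset {c c' : Euc n} {l l' : ℝ} (hn : 1 ≤ n) (hl : 0 < l)
    (hsub : cube n c l ⊆ cube n c' l') :
    carlesonRegion n c l ⊆ carlesonRegion n c' l' := by
  rintro p ⟨h1, h2, h3⟩
  exact ⟨hsub h1, h2, h3.trans_le (length_le_of_cube_subset hn hl hsub)⟩

/-! ### Integral helpers -/

lemma intle {X : Type*} [MeasurableSpace X] {μ : Measure X} {g : X → ℝ} {A A1 A2 : Set X}
    (hA : A ⊆ A1 ∪ A2) (h1 : IntegrableOn g A1 μ) (h2 : IntegrableOn g A2 μ)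
    (hg1 : 0 ≤ᵐ[μ.restrict A1] g) (hg2 : 0 ≤ᵐ[μ.restrict A2] g) :
    ∫ x in A, g x ∂μ ≤ ∫ x in A1, g x ∂μ + ∫ x in A2, g x ∂μ := by
  have hle : μ.restrict A ≤ μ.restrict A1 + μ.restrict A2 :=
    le_trans (Measure.restrict_mono hA le_rfl) (Measure.restrict_union_le _ _)
  have hint : Integrable g (μ.restrict A1 + μ.restrict A2) :=
    (integrable_add_measure).2 ⟨h1, h2⟩
  have hpos : 0 ≤ᵐ[μ.restrict A1 + μ.restrict A2] g := ae_add_measure_iff.mpr ⟨hg1, hg2⟩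
  calc ∫ x in A, g x ∂μ ≤ ∫ x, g x ∂(μ.restrict A1 + μ.restrict A2) :=
        integral_mono_measure hle hpos hint
    _ = _ := integral_add_measure h1 h2

lemma intle_bUnion {ι X : Type*} [MeasurableSpace X] {μ : Measure X} {g : X → ℝ}
    (s : Finset ι) (A : ι → Set X)
    (hint : ∀ i ∈ s, IntegrableOn g (A i) μ) (hg : ∀ i ∈ s, 0 ≤ᵐ[μ.restrict (A i)] g) :
    ∫ x in ⋃ i ∈ s, A i, g x ∂μ ≤ ∑ i ∈ s, ∫ x in A i, g x ∂μ := by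
  classical
  induction s using Finset.induction with
  | empty => simp
  | insert a t hni ih =>
    rw [Finset.sum_insert hni]
    have hu : (⋃ i ∈ insert a t, A i) ⊆ A a ∪ ⋃ i ∈ t, A i := by
      intro x hx
      simp only [Set.mem_iUnion, Finset.mem_insert] at hx
      obtain ⟨i, hi, hxi⟩ := hx
      rcases hi with rfl | hi
      · exact Or.inl hxi
      · exact Or.inr (Set.mem_iUnion₂.2 ⟨i, hi, hxi⟩)
    have hint2 : IntegrableOn g (⋃ i ∈ t, A i) μ := by
      rw [integrableOn_finset_iUnion]
      exact fun i hi => hint i (Finset.mem_insert_of_mem hi)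
    have hg2 : 0 ≤ᵐ[μ.restrict (⋃ i ∈ t, A i)] g :=
      (ae_restrict_biUnion_finset_iff A t _).mpr
        (fun i hi => hg i (Finset.mem_insert_of_mem hi))
    calc ∫ x in ⋃ i ∈ insert a t, A i, g x ∂μ
        ≤ ∫ x in A a, g x ∂μ + ∫ x in ⋃ i ∈ t, A i, g x ∂μ :=
          intle hu (hint a (Finset.mem_insert_self a t)) hint2
            (hg a (Finset.mem_insert_self a t)) hg2
      _ ≤ _ := by
          gcongr
          exact ih (fun i hi => hint i (Finset.mem_insert_of_mem hi))
            (fun i hi => hg i (Finset.mem_insert_of_mem hi))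


/-! ### The key self-improvement induction -/

set_option maxHeartbeats 2000000 in
theorem key (hn : 1 ≤ n) {η β α : ℝ} (hη0 : 0 < η) (hη1 : η < 1) (hβ : 0 ≤ β)
    (hα : α = 2 * Real.sqrt n + 2)
    (cΔ : Euc n) {lΔ : ℝ} (hlΔ : 0 < lΔ) (v : Euc n × ℝ → ℝ)
    (hv0 : ∀ p, 0 ≤ v p)
    (hvi : IntegrableOn v (carlesonRegion n cΔ lΔ) volume)
    (H : ∀ c l, 0 < l → cube n c l ⊆ cube n cΔ lΔ →
      ∃ F, IsOpen F ∧ F ⊆ cube n c l ∧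
        η * (volume (cube n c l)).toReal ≤ (volume F).toReal ∧
        ∫ p in sawtooth n α F ∩ carlesonRegion n c l, v p * p.2 ∂volume
          ≤ β * (volume (cube n c l)).toReal) :
    ∀ (m : ℕ) (ε : ℝ), 0 < ε → ∀ (c : Euc n) (l : ℝ), 0 < l →
      cube n c l ⊆ cube n cΔ lΔ → l ≤ 2 ^ m * ε →
      ∫ p in carlesonRegion n c l ∩ {p : Euc n × ℝ | ε < p.2}, v p * p.2 ∂volume
        ≤ β / η * (volume (cube n c l)).toReal := by
  classical
  set g : Euc n × ℝ → ℝ := fun p => v p * p.2 with hgdef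
  -- integrability of g on the big Carleson region
  have hTΔmeas := measurableSet_carlesonRegion cΔ lΔ
  have hgint : IntegrableOn g (carlesonRegion n cΔ lΔ) volume := by
    refine Integrable.mono' (hvi.const_mul lΔ) ?_ ?_
    · exact hvi.aestronglyMeasurable.mul (continuous_snd.aestronglyMeasurable)
    · refine (ae_restrict_iff' hTΔmeas).2 (ae_of_all _ fun p hp => ?_)
      have h2 := hp.2
      have hvp := hv0 p
      rw [Real.norm_eq_abs, abs_mul, abs_of_nonneg hvp, abs_of_nonneg h2.1.le]
      calc v p * p.2 ≤ v p * lΔ := by nlinarith [h2.2]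
        _ = lΔ * v p := mul_comm _ _
  have hgint' : ∀ S : Set (Euc n × ℝ), S ⊆ carlesonRegion n cΔ lΔ →
      IntegrableOn g S volume := fun S hS => hgint.mono_set hS
  have hgpos : ∀ S : Set (Euc n × ℝ), MeasurableSet S → S ⊆ {p : Euc n × ℝ | 0 < p.2} →
      0 ≤ᵐ[volume.restrict S] g := by
    intro S hS hsub
    refine (ae_restrict_iff' hS).2 (ae_of_all _ fun p hp => ?_)
    exact mul_nonneg (hv0 p) (hsub hp).le
  -- the empty-region case
  have empty_case : ∀ (ε : ℝ) (c : Euc n) (l : ℝ), 0 < ε → 0 < l → l ≤ ε →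
      ∫ p in carlesonRegion n c l ∩ {p : Euc n × ℝ | ε < p.2}, g p ∂volume
        ≤ β / η * (volume (cube n c l)).toReal := by
    intro ε c l hε hl hle
    have hempty : carlesonRegion n c l ∩ {p : Euc n × ℝ | ε < p.2} = ∅ := by
      ext p
      simp only [mem_inter_iff, mem_empty_iff_false, iff_false, not_and, mem_setOf_eq]
      rintro ⟨_, _, h3⟩ h4
      linarith
    rw [hempty]
    simp only [Measure.restrict_empty, integral_zero_measure]
    positivity
  intro m
  induction m with
  | zero =>
    intro ε hε c l hl hsub hle
    exact empty_case ε c l hε hl (by simpa using hle)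
  | succ m ih =>
    intro ε hε c l hl hsub hle
    by_cases hcase : l ≤ ε
    · exact empty_case ε c l hε hl hcase
    push_neg at hcase
    obtain ⟨F, hFopen, hFsub, hFvol, hFint⟩ := H c l hl hsub
    set a : Euc n := corner c l with hadef
    have hlnpos : (0:ℝ) < l ^ n := pow_pos hl n
    have hcubetr : (volume (cube n c l)).toReal = l ^ n := volume_cube_toReal c hl.le
    have hsqn : (1:ℝ) ≤ Real.sqrt n := by
      rw [show (1:ℝ) = Real.sqrt 1 by simp]
      exact Real.sqrt_le_sqrt (by exact_mod_cast hn)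
    have hα2 : 2 * Real.sqrt n < α := by rw [hα]; linarith
    have hα0 : 0 < α := by rw [hα]; linarith
    -- F meets the half-open base cell
    have hFbase : (F ∩ cell a (sgen l 0) 0).Nonempty := by
      have hFne : volume F ≠ 0 := by
        intro h0
        rw [h0] at hFvol
        simp only [ENNReal.toReal_zero] at hFvol
        rw [hcubetr] at hFvol
        nlinarith
      have hb0 := volume_cube_diff_base c hl
      have hcover : F ⊆ (F ∩ cell a (sgen l 0) 0) ∪ (cube n c l \ cell a (sgen l 0) 0) := by
        intro y hy
        by_cases hyc : y ∈ cell a (sgen l 0) 0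
        · exact Or.inl ⟨hy, hyc⟩
        · exact Or.inr ⟨hFsub hy, hyc⟩
      have : volume F ≤ volume (F ∩ cell a (sgen l 0) 0) + 0 := by
        calc volume F ≤ volume ((F ∩ cell a (sgen l 0) 0) ∪ (cube n c l \ cell a (sgen l 0) 0)) :=
              measure_mono hcover
          _ ≤ volume (F ∩ cell a (sgen l 0) 0) + volume (cube n c l \ cell a (sgen l 0) 0) :=
              measure_union_le _ _
          _ = volume (F ∩ cell a (sgen l 0) 0) + 0 := by rw [hb0]
      rw [add_zero] at this
      have hne : volume (F ∩ cell a (sgen l 0) 0) ≠ 0 := by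
        intro h0; rw [h0] at this; exact hFne (le_antisymm this zero_le)
      exact nonempty_of_measure_ne_zero hne
    -- the index sets
    let K : ℕ → Finset (Fin n → ℤ) := fun j =>
      (Fintype.piFinset fun _ : Fin n => Finset.Icc (0:ℤ) (2 ^ j - 1)).filter
        (fun k => (∀ y ∈ F, idx a (sgen l j) y ≠ k) ∧
          ∃ y ∈ F, idx a (sgen l (j - 1)) y = pidx k)
    have hKrange : ∀ j, ∀ k ∈ K j, ∀ i, 0 ≤ k i ∧ k i + 1 ≤ 2 ^ j := by
      intro j k hk i
      have := (Finset.mem_filter.1 hk).1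
      have h := (Fintype.mem_piFinset.1 this) i
      have := Finset.mem_Icc.1 h
      omega
    have hKdis : ∀ j, ∀ k ∈ K j, ∀ y ∈ F, idx a (sgen l j) y ≠ k :=
      fun j k hk => ((Finset.mem_filter.1 hk).2).1
    have hKpar : ∀ j, ∀ k ∈ K j, ∃ y ∈ F, idx a (sgen l (j - 1)) y = pidx k :=
      fun j k hk => ((Finset.mem_filter.1 hk).2).2
    -- cells over K j are contained in Q \ F
    have hcellsub : ∀ j, 1 ≤ j → ∀ k ∈ K j, cell a (sgen l j) k ⊆ cube n c l \ F := by
      intro j hj k hk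
      intro y hy
      constructor
      · exact cube_of_cell_subset hl rfl (hKrange j k hk) (cell_subset_cube k hy)
      · intro hyF
        exact hKdis j k hk y hyF ((mem_cell_iff (sgen_pos hl j)).1 hy)
    -- the sets in the product space
    let D : ℕ → (Fin n → ℤ) → Set (Euc n × ℝ) := fun j k =>
      (cell a (sgen l j) k) ×ˢ (Ioo ε (sgen l j))
    -- covering of the bad set
    set B : Set (Euc n × ℝ) :=
      (carlesonRegion n c l ∩ {p : Euc n × ℝ | ε < p.2}) \ sawtooth n α F with hBdef
    have hcover : B ⊆ ((cube n c l \ cell a (sgen l 0) 0) ×ˢ (univ : Set ℝ))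
        ∪ ⋃ j ∈ Finset.Icc 1 m, ⋃ k ∈ K j, D j k := by
      rintro ⟨x, t⟩ ⟨⟨⟨hxcube, ht0, htl⟩, htε⟩, hns⟩
      simp only [mem_setOf_eq] at htε
      by_cases hxh : x ∈ cell a (sgen l 0) 0
      swap
      · exact Or.inl ⟨⟨hxcube, hxh⟩, trivial⟩
      right
      have hdist : ∀ y ∈ F, α * t ≤ ‖x - y‖ := by
        intro y hy
        by_contra hlt
        push_neg at hlt
        exact hns (Set.mem_iUnion₂.2 ⟨y, hy, ⟨ht0, hlt⟩⟩)
      -- the predicate "cell of x at generation j misses F" holds at m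
      have hpredm : ∀ y ∈ F, idx a (sgen l m) y ≠ idx a (sgen l m) x := by
        intro y hy heq
        have hd : ‖x - y‖ ≤ Real.sqrt n * sgen l m := by
          rw [norm_sub_rev]; exact dist_of_idx_eq (sgen_pos hl m) heq
        have h1 := hdist y hy
        have hsm : sgen l m ≤ 2 * ε := by
          rw [sgen, div_le_iff₀ (by positivity)]
          calc l ≤ 2 ^ (m + 1) * ε := hle
            _ = 2 * ε * 2 ^ m := by ring
        nlinarith [Real.sqrt_nonneg (n:ℝ)]
      have hex : ∃ j, ∀ y ∈ F, idx a (sgen l j) y ≠ idx a (sgen l j) x := ⟨m, hpredm⟩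
      set j₀ := Nat.find hex with hj₀def
      have hspec := Nat.find_spec hex
      have hj₀le : j₀ ≤ m := Nat.find_le hpredm
      have hnp0 : ¬ (∀ y ∈ F, idx a (sgen l 0) y ≠ idx a (sgen l 0) x) := by
        obtain ⟨y, hyF, hycell⟩ := hFbase
        have hyx : idx a (sgen l 0) y = idx a (sgen l 0) x := by
          rw [(mem_cell_iff (sgen_pos hl 0)).1 hycell,
            (mem_cell_iff (sgen_pos hl 0)).1 hxh]
        intro hforall
        exact hforall y hyF hyx
      have hj₀pos : 1 ≤ j₀ :=
        Nat.pos_of_ne_zero (fun h0 => hnp0 (by rw [← h0]; exact Nat.find_spec hex))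
      have hparw : ∃ y ∈ F, idx a (sgen l (j₀ - 1)) y = idx a (sgen l (j₀ - 1)) x := by
        have hmin := Nat.find_min hex (show j₀ - 1 < j₀ by omega)
        push_neg at hmin
        obtain ⟨y, hyF, hyeq⟩ := hmin
        exact ⟨y, hyF, hyeq⟩
      obtain ⟨y₀, hy₀F, hy₀⟩ := hparw
      have hrel : sgen l (j₀ - 1) = 2 * sgen l j₀ := by
        have := sgen_succ l (j₀ - 1)
        rwa [Nat.sub_add_cancel hj₀pos] at this
      have hsj₀ : 0 < sgen l j₀ := sgen_pos hl j₀
      have htlt : t < sgen l j₀ := by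
        have hd : ‖x - y₀‖ ≤ Real.sqrt n * (2 * sgen l j₀) := by
          rw [norm_sub_rev, ← hrel]
          exact dist_of_idx_eq (sgen_pos hl _) hy₀
        have h1 := hdist y₀ hy₀F
        nlinarith [Real.sqrt_nonneg (n:ℝ)]
      have hidxpar : idx a (sgen l (j₀ - 1)) x = pidx (idx a (sgen l j₀) x) := by
        rw [hrel]; exact idx_double a (sgen l j₀) x
      have hkmem : idx a (sgen l j₀) x ∈ K j₀ := by
        refine Finset.mem_filter.2 ⟨?_, hspec, ⟨y₀, hy₀F, by rw [hy₀, hidxpar]⟩⟩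
        refine Fintype.mem_piFinset.2 fun i => Finset.mem_Icc.2 ⟨?_, ?_⟩
        · refine Int.floor_nonneg.2 (div_nonneg ?_ hsj₀.le)
          have := (hxh i).1
          simp only [Pi.zero_apply, Int.cast_zero, zero_mul, add_zero, sgen_zero] at this
          linarith
        · have hlt : idx a (sgen l j₀) x i < 2 ^ j₀ := by
            refine Int.floor_lt.2 ?_
            rw [div_lt_iff₀ hsj₀]
            push_cast
            have h2 := (hxh i).2
            simp only [Pi.zero_apply, Int.cast_zero, zero_add, one_mul, sgen_zero] at h2
            have hpow : (2:ℝ) ^ j₀ * sgen l j₀ = l := by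
              rw [sgen]; field_simp
            linarith
          omega
      refine Set.mem_iUnion₂.2 ⟨j₀, Finset.mem_Icc.2 ⟨hj₀pos, hj₀le⟩,
        Set.mem_iUnion₂.2 ⟨idx a (sgen l j₀) x, hkmem, ?_⟩⟩
      exact ⟨(mem_cell_iff hsj₀).2 rfl, ⟨htε, htlt⟩⟩
    -- measurability facts
    have hTQmeas := measurableSet_carlesonRegion c l
    have hTQsub : carlesonRegion n c l ⊆ carlesonRegion n cΔ lΔ := carleson_subset hn hl hsub
    have hεmeas : MeasurableSet {p : Euc n × ℝ | ε < p.2} :=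
      measurableSet_lt measurable_const measurable_snd
    have hSmeas : MeasurableSet (sawtooth n α F ∩ carlesonRegion n c l) :=
      ((isOpen_sawtooth α F).measurableSet).inter hTQmeas
    have hBmeas : MeasurableSet B :=
      (hTQmeas.inter hεmeas).diff (isOpen_sawtooth α F).measurableSet
    have hDmeas : ∀ j k, MeasurableSet (D j k) := fun j k =>
      (measurableSet_cell _ _ _).prod measurableSet_Ioo
    have hDsub : ∀ j, 1 ≤ j → ∀ k ∈ K j,
        D j k ⊆ carlesonRegion n (ctr a (sgen l j) k) (sgen l j) ∩ {p : Euc n × ℝ | ε < p.2} := by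
      rintro j hj k hk ⟨x, t⟩ ⟨hx, ht⟩
      exact ⟨⟨cell_subset_cube k hx, lt_trans hε ht.1, ht.2⟩, ht.1⟩
    have hcc : ∀ j, ∀ k ∈ K j, cube n (ctr a (sgen l j) k) (sgen l j) ⊆ cube n cΔ lΔ :=
      fun j k hk => (cube_of_cell_subset hl rfl (hKrange j k hk)).trans hsub
    have hDsubΔ : ∀ j, 1 ≤ j → ∀ k ∈ K j, D j k ⊆ carlesonRegion n cΔ lΔ := by
      intro j hj k hk
      exact (hDsub j hj k hk).trans (inter_subset_left.trans
        (carleson_subset hn (sgen_pos hl j) (hcc j k hk)))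
    -- step 1: split off the sawtooth part
    have hsplit : ∫ p in carlesonRegion n c l ∩ {p : Euc n × ℝ | ε < p.2}, g p ∂volume ≤
        (∫ p in sawtooth n α F ∩ carlesonRegion n c l, g p ∂volume) +
          ∫ p in B, g p ∂volume := by
      refine intle ?_ (hgint' _ (inter_subset_right.trans hTQsub))
        (hgint' _ ((diff_subset).trans (inter_subset_left.trans hTQsub)))
        (hgpos _ hSmeas fun p hp => hp.2.2.1) (hgpos _ hBmeas fun p hp => hp.1.1.2.1)
      intro p hp
      by_cases hps : p ∈ sawtooth n α F
      · exact Or.inl ⟨hps, hp.1⟩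
      · exact Or.inr ⟨hp, hps⟩
    -- the null boundary part
    set N : Set (Euc n × ℝ) := (cube n c l \ cell a (sgen l 0) 0) ×ˢ (univ : Set ℝ) with hNdef
    have hN0 : volume N = 0 := by
      rw [hNdef, Measure.volume_eq_prod, Measure.prod_prod, volume_cube_diff_base c hl, zero_mul]
    have hNrestrict : volume.restrict N = 0 := Measure.restrict_eq_zero.2 hN0
    have hNint : IntegrableOn g N volume := by
      rw [IntegrableOn, hNrestrict]; exact integrable_zero_measure
    have hNpos : 0 ≤ᵐ[volume.restrict N] g := by
      rw [hNrestrict]; simp [Filter.EventuallyLE, ae_zero]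
    have hNzero : ∫ p in N, g p ∂volume = 0 := by
      rw [hNrestrict]; exact integral_zero_measure _
    -- step 2: bound the bad-set integral by the sum over cells
    set U : Set (Euc n × ℝ) := ⋃ j ∈ Finset.Icc 1 m, ⋃ k ∈ K j, D j k with hUdef
    have hUjint : ∀ j ∈ Finset.Icc 1 m, IntegrableOn g (⋃ k ∈ K j, D j k) volume := by
      intro j hj
      rw [integrableOn_finset_iUnion]
      exact fun k hk => hgint' _ (hDsubΔ j (Finset.mem_Icc.1 hj).1 k hk)
    have hUjmeas : ∀ j, MeasurableSet (⋃ k ∈ K j, D j k) := fun j =>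
      MeasurableSet.biUnion ((K j : Set (Fin n → ℤ))).to_countable fun k _ => hDmeas j k
    have hUjpos : ∀ j ∈ Finset.Icc 1 m, 0 ≤ᵐ[volume.restrict (⋃ k ∈ K j, D j k)] g := by
      intro j hj
      refine hgpos _ (hUjmeas j) ?_
      refine iUnion₂_subset fun k hk => ?_
      exact fun p hp => (hDsubΔ j (Finset.mem_Icc.1 hj).1 k hk hp).2.1
    have hUint : IntegrableOn g U volume := by
      rw [hUdef, integrableOn_finset_iUnion]; exact hUjint
    have hUpos : 0 ≤ᵐ[volume.restrict U] g := by
      refine hgpos _ (MeasurableSet.biUnion (Finset.Icc 1 m : Set ℕ).to_countable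
        fun j _ => hUjmeas j) ?_
      refine iUnion₂_subset fun j hj => iUnion₂_subset fun k hk => ?_
      exact fun p hp => (hDsubΔ j (Finset.mem_Icc.1 hj).1 k hk hp).2.1
    have hBbound : ∫ p in B, g p ∂volume ≤
        ∑ j ∈ Finset.Icc 1 m, ∑ k ∈ K j, ∫ p in D j k, g p ∂volume := by
      calc ∫ p in B, g p ∂volume ≤ (∫ p in N, g p ∂volume) + ∫ p in U, g p ∂volume :=
            intle hcover hNint hUint hNpos hUpos
        _ = ∫ p in U, g p ∂volume := by rw [hNzero, zero_add]
        _ ≤ ∑ j ∈ Finset.Icc 1 m, ∫ p in ⋃ k ∈ K j, D j k, g p ∂volume :=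
            intle_bUnion _ _ hUjint hUjpos
        _ ≤ _ := by
            refine Finset.sum_le_sum fun j hj => ?_
            exact intle_bUnion _ _
              (fun k hk => hgint' _ (hDsubΔ j (Finset.mem_Icc.1 hj).1 k hk))
              (fun k hk => hgpos _ (hDmeas j k)
                (fun p hp => (hDsubΔ j (Finset.mem_Icc.1 hj).1 k hk hp).2.1))
    -- step 3: apply the inductive hypothesis on each cell
    have hDle : ∀ j ∈ Finset.Icc 1 m, ∀ k ∈ K j,
        ∫ p in D j k, g p ∂volume ≤ β / η * (sgen l j) ^ n := by
      intro j hj k hk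
      obtain ⟨hj1, hjm⟩ := Finset.mem_Icc.1 hj
      have hsj := sgen_pos hl j
      have h1 : ∫ p in D j k, g p ∂volume ≤
          ∫ p in carlesonRegion n (ctr a (sgen l j) k) (sgen l j) ∩
            {p : Euc n × ℝ | ε < p.2}, g p ∂volume := by
        refine setIntegral_mono_set
          (hgint' _ (inter_subset_left.trans (carleson_subset hn hsj (hcc j k hk))))
          (hgpos _ ((measurableSet_carlesonRegion _ _).inter hεmeas) fun p hp => hp.1.2.1)
          ((hDsub j hj1 k hk).eventuallyLE)
      have hlen : sgen l j ≤ 2 ^ m * ε := by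
        have h2 : sgen l j ≤ sgen l 1 := sgen_anti hl hj1
        have h3 : sgen l 1 = l / 2 := by rw [sgen]; norm_num
        have : l / 2 ≤ 2 ^ m * ε := by
          rw [div_le_iff₀ (by norm_num : (0:ℝ) < 2)]
          calc l ≤ 2 ^ (m + 1) * ε := hle
            _ = 2 ^ m * ε * 2 := by ring
        linarith
      have h2 := ih ε hε (ctr a (sgen l j) k) (sgen l j) hsj (hcc j k hk) hlen
      rw [volume_cube_toReal _ hsj.le] at h2
      exact h1.trans h2
    -- step 4: the total volume of the cells is at most (1-η)|Q|
    have hcubefin : volume (cube n c l) ≠ ⊤ := by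
      rw [volume_cube c hl.le]
      exact ENNReal.pow_ne_top ENNReal.ofReal_ne_top
    have hFfin : volume F ≠ ⊤ := fun h =>
      hcubefin (eq_top_iff.2 (h ▸ measure_mono hFsub))
    have hgen : ∀ {j j' : ℕ}, 1 ≤ j → j < j' → ∀ k ∈ K j, ∀ k' ∈ K j', ∀ y : Euc n,
        y ∈ cell a (sgen l j) k → y ∈ cell a (sgen l j') k' → False := by
      intro j j' hj1 hjj' k hk k' hk' y hy hy'
      obtain ⟨z, hzF, hz⟩ := hKpar j' k' hk'
      have hky : idx a (sgen l j) y = k := (mem_cell_iff (sgen_pos hl j)).1 hy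
      have hky' : idx a (sgen l j') y = k' := (mem_cell_iff (sgen_pos hl j')).1 hy'
      have hrel' : sgen l (j' - 1) = 2 * sgen l j' := by
        have := sgen_succ l (j' - 1)
        rwa [Nat.sub_add_cancel (by omega)] at this
      have hpz : idx a (sgen l (j' - 1)) y = pidx k' := by
        rw [hrel', idx_double, hky']
      have hzy : idx a (sgen l (j' - 1)) z = idx a (sgen l (j' - 1)) y := by rw [hz, hpz]
      have hjy : idx a (sgen l j) z = idx a (sgen l j) y :=
        idx_coarse (by omega : j ≤ j' - 1) hzy
      exact hKdis j k hk z hzF (by rw [hjy, hky])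
    have hvolsum : ∑ j ∈ Finset.Icc 1 m, ∑ k ∈ K j, (sgen l j) ^ n ≤ (1 - η) * l ^ n := by
      have hinner : ∀ j ∈ Finset.Icc 1 m,
          ∑ k ∈ K j, volume (cell a (sgen l j) k)
            = volume (⋃ k ∈ K j, cell a (sgen l j) k) := by
        intro j hj
        refine (measure_biUnion_finset ?_ fun k hk => measurableSet_cell _ _ _).symm
        intro k hk k' hk' hne
        refine Set.disjoint_left.2 fun y hy hy' => hne ?_
        rw [← (mem_cell_iff (sgen_pos hl j)).1 hy, ← (mem_cell_iff (sgen_pos hl j)).1 hy']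
      have houter : ∑ j ∈ Finset.Icc 1 m, volume (⋃ k ∈ K j, cell a (sgen l j) k)
          = volume (⋃ j ∈ Finset.Icc 1 m, ⋃ k ∈ K j, cell a (sgen l j) k) := by
        refine (measure_biUnion_finset ?_ fun j hj =>
          MeasurableSet.biUnion ((K j : Set (Fin n → ℤ))).to_countable
            fun k _ => measurableSet_cell _ _ _).symm
        intro j hj j' hj' hne
        refine Set.disjoint_left.2 fun y hyj hyj' => ?_
        simp only [Set.mem_iUnion, exists_prop] at hyj hyj'
        obtain ⟨k, hk, hyk⟩ := hyj
        obtain ⟨k', hk', hyk'⟩ := hyj'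
        rcases lt_or_gt_of_ne hne with hlt | hgt
        · exact hgen (Finset.mem_Icc.1 hj).1 hlt k hk k' hk' y hyk hyk'
        · exact hgen (Finset.mem_Icc.1 hj').1 hgt k' hk' k hk y hyk' hyk
      have hsub2 : (⋃ j ∈ Finset.Icc 1 m, ⋃ k ∈ K j, cell a (sgen l j) k)
          ⊆ cube n c l \ F :=
        iUnion₂_subset fun j hj => iUnion₂_subset fun k hk =>
          hcellsub j (Finset.mem_Icc.1 hj).1 k hk
      have hENN : ∑ j ∈ Finset.Icc 1 m, ∑ k ∈ K j, volume (cell a (sgen l j) k)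
          ≤ volume (cube n c l \ F) := by
        rw [Finset.sum_congr rfl hinner, houter]
        exact measure_mono hsub2
      have hdifffin : volume (cube n c l \ F) ≠ ⊤ := fun h =>
        hcubefin (eq_top_iff.2 (h ▸ measure_mono diff_subset))
      have hdiffT : (volume (cube n c l \ F)).toReal ≤ (1 - η) * l ^ n := by
        rw [measure_diff hFsub hFopen.measurableSet.nullMeasurableSet hFfin,
          ENNReal.toReal_sub_of_le (measure_mono hFsub) hcubefin, hcubetr]
        have := hFvol
        rw [hcubetr] at this
        linarith
      have hfin : ∀ (j : ℕ) (k : Fin n → ℤ), volume (cell a (sgen l j) k) ≠ ⊤ := by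
        intro j k
        rw [volume_cell a (sgen_pos hl j).le]
        exact ENNReal.pow_ne_top ENNReal.ofReal_ne_top
      have hcellr : ∀ (j : ℕ) (k : Fin n → ℤ),
          (volume (cell a (sgen l j) k)).toReal = (sgen l j) ^ n := by
        intro j k
        rw [volume_cell a (sgen_pos hl j).le, ← ENNReal.ofReal_pow (sgen_pos hl j).le,
          ENNReal.toReal_ofReal (pow_nonneg (sgen_pos hl j).le n)]
      have hjfin : ∀ j ∈ Finset.Icc 1 m, ∑ k ∈ K j, volume (cell a (sgen l j) k) ≠ ⊤ := by
        intro j hj h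
        rw [ENNReal.sum_eq_top] at h
        obtain ⟨k, hk, hkt⟩ := h
        exact hfin j k hkt
      have hLHS : ∑ j ∈ Finset.Icc 1 m, ∑ k ∈ K j, (sgen l j) ^ n
          = (∑ j ∈ Finset.Icc 1 m, ∑ k ∈ K j, volume (cell a (sgen l j) k)).toReal := by
        rw [ENNReal.toReal_sum hjfin]
        refine Finset.sum_congr rfl fun j hj => ?_
        rw [ENNReal.toReal_sum (fun k hk => hfin j k)]
        exact Finset.sum_congr rfl fun k hk => (hcellr j k).symm
      rw [hLHS]
      exact le_trans (ENNReal.toReal_mono hdifffin hENN) hdiffT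
    -- final combination
    have hfinal : (∫ p in sawtooth n α F ∩ carlesonRegion n c l, g p ∂volume) +
        ∫ p in B, g p ∂volume ≤ β / η * l ^ n := by
      have h1 : ∫ p in B, g p ∂volume ≤ β / η * ((1 - η) * l ^ n) := by
        calc ∫ p in B, g p ∂volume
            ≤ ∑ j ∈ Finset.Icc 1 m, ∑ k ∈ K j, ∫ p in D j k, g p ∂volume := hBbound
          _ ≤ ∑ j ∈ Finset.Icc 1 m, ∑ k ∈ K j, β / η * (sgen l j) ^ n :=
              Finset.sum_le_sum fun j hj => Finset.sum_le_sum fun k hk => hDle j hj k hk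
          _ = β / η * ∑ j ∈ Finset.Icc 1 m, ∑ k ∈ K j, (sgen l j) ^ n := by
              simp only [← Finset.mul_sum]
          _ ≤ β / η * ((1 - η) * l ^ n) := by
              refine mul_le_mul_of_nonneg_left hvolsum (by positivity)
      have h2 : ∫ p in sawtooth n α F ∩ carlesonRegion n c l, g p ∂volume ≤ β * l ^ n := by
        rw [← hcubetr]; exact hFint
      have heq : β * l ^ n + β / η * ((1 - η) * l ^ n) = β / η * l ^ n := by
        field_simp
        ring
      linarith
    rw [hcubetr]
    exact hsplit.trans hfinal


end

end STAux

/-- Self-improvement of the sawtooth square-function bound to the full Carleson-box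
square-function bound: for `0 < η < 1` there are `α > 1` and `C < ∞` such that if on
every subcube `Q ⊆ Δ` there is an open set `F ⊆ Q` with `|F| ≥ η |Q|` on whose truncated
sawtooth the square function of `u` is at most `β |Q|`, then the square function of `u`
over `T(Δ)` is at most `C β |Δ|`. -/
theorem sawtooth_to_carleson_square_function (n : ℕ) (hn : 1 ≤ n)
    (η : ℝ) (hη0 : 0 < η) (hη1 : η < 1) :
    ∃ α : ℝ, 1 < α ∧ ∃ C : ℝ,
      ∀ (cΔ : EuclideanSpace ℝ (Fin n)) (lΔ : ℝ), 0 < lΔ →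
      ∀ u : EuclideanSpace ℝ (Fin n) × ℝ → ℝ,
      DifferentiableOn ℝ u (upperHalf n) →
      IntegrableOn (fun p => ‖fderivWithin ℝ u (upperHalf n) p‖ ^ 2)
        (carlesonRegion n cΔ lΔ) volume →
      ∀ β : ℝ, 0 ≤ β →
      (∀ (cQ : EuclideanSpace ℝ (Fin n)) (lQ : ℝ), 0 < lQ →
        cube n cQ lQ ⊆ cube n cΔ lΔ →
        ∃ F : Set (EuclideanSpace ℝ (Fin n)), IsOpen F ∧ F ⊆ cube n cQ lQ ∧
          η * (volume (cube n cQ lQ)).toReal ≤ (volume F).toReal ∧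
          ∫ p in sawtooth n α F ∩ carlesonRegion n cQ lQ,
              ‖fderivWithin ℝ u (upperHalf n) p‖ ^ 2 * p.2 ∂volume
            ≤ β * (volume (cube n cQ lQ)).toReal) →
      ∫ p in carlesonRegion n cΔ lΔ,
          ‖fderivWithin ℝ u (upperHalf n) p‖ ^ 2 * p.2 ∂volume
        ≤ C * β * (volume (cube n cΔ lΔ)).toReal := by
  refine ⟨2 * Real.sqrt n + 2, ?_, η⁻¹, ?_⟩
  · have := Real.sqrt_nonneg (n : ℝ); linarith
  intro cΔ lΔ hlΔ u hu hint β hβ H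
  have hv0 : ∀ p : EuclideanSpace ℝ (Fin n) × ℝ, (0:ℝ) ≤ ‖fderivWithin ℝ u (upperHalf n) p‖ ^ 2 :=
    fun p => by positivity
  have hkey := STAux.key hn hη0 hη1 hβ rfl cΔ hlΔ
    (fun p => ‖fderivWithin ℝ u (upperHalf n) p‖ ^ 2) hv0 hint
    (fun c l hl hsub => H c l hl hsub)
  set g : EuclideanSpace ℝ (Fin n) × ℝ → ℝ := fun p => ‖fderivWithin ℝ u (upperHalf n) p‖ ^ 2 * p.2 with hgdef
  -- integrability of g on the Carleson region
  have hTΔmeas := STAux.measurableSet_carlesonRegion cΔ lΔ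
  have hgint : IntegrableOn g (carlesonRegion n cΔ lΔ) volume := by
    refine Integrable.mono' (hint.const_mul lΔ) ?_ ?_
    · exact hint.aestronglyMeasurable.mul (continuous_snd.aestronglyMeasurable)
    · refine (ae_restrict_iff' hTΔmeas).2 (ae_of_all _ fun p hp => ?_)
      have h2 := hp.2
      have hvp := hv0 p
      rw [hgdef]
      simp only
      rw [Real.norm_eq_abs, abs_mul, abs_of_nonneg hvp, abs_of_nonneg h2.1.le]
      calc ‖fderivWithin ℝ u (upperHalf n) p‖ ^ 2 * p.2
          ≤ ‖fderivWithin ℝ u (upperHalf n) p‖ ^ 2 * lΔ := by nlinarith [h2.2]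
        _ = lΔ * ‖fderivWithin ℝ u (upperHalf n) p‖ ^ 2 := mul_comm _ _
  -- monotone family exhausting the Carleson region
  set S : ℕ → Set (EuclideanSpace ℝ (Fin n) × ℝ) := fun m =>
    carlesonRegion n cΔ lΔ ∩ {p : EuclideanSpace ℝ (Fin n) × ℝ | STAux.sgen lΔ m < p.2} with hSdef
  have hSmeas : ∀ m, MeasurableSet (S m) := fun m =>
    hTΔmeas.inter (measurableSet_lt measurable_const measurable_snd)
  have hmono : Monotone S := by
    intro m m' hmm p hp
    exact ⟨hp.1, lt_of_le_of_lt (STAux.sgen_anti hlΔ hmm) hp.2⟩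
  have hunion : ⋃ m, S m = carlesonRegion n cΔ lΔ := by
    apply Set.Subset.antisymm
    · exact iUnion_subset fun m => inter_subset_left
    · intro p hp
      have h2 : 0 < p.2 := hp.2.1
      obtain ⟨m, hm⟩ : ∃ m : ℕ, STAux.sgen lΔ m < p.2 := by
        obtain ⟨m, hm⟩ := exists_pow_lt_of_lt_one (div_pos h2 hlΔ)
          (by norm_num : (1:ℝ) / 2 < 1)
        refine ⟨m, ?_⟩
        rw [STAux.sgen]
        rw [div_lt_iff₀ (by positivity : (0:ℝ) < 2 ^ m)]
        rw [div_pow] at hm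
        rw [div_lt_div_iff₀ (by positivity) hlΔ] at hm
        simp only [one_pow] at hm
        nlinarith
      exact mem_iUnion.2 ⟨m, hp, hm⟩
  have htendsto := tendsto_setIntegral_of_monotone hSmeas hmono (by rw [hunion]; exact hgint)
  rw [hunion] at htendsto
  have hbound : ∀ m, ∫ p in S m, g p ∂volume
      ≤ η⁻¹ * β * (volume (cube n cΔ lΔ)).toReal := by
    intro m
    have hεpos : 0 < STAux.sgen lΔ m := STAux.sgen_pos hlΔ m
    have hlen : lΔ ≤ 2 ^ m * STAux.sgen lΔ m := by
      rw [STAux.sgen]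
      rw [mul_div_cancel₀ _ (by positivity : ((2:ℝ) ^ m) ≠ 0)]
    have h := hkey m (STAux.sgen lΔ m) hεpos cΔ lΔ hlΔ subset_rfl hlen
    calc ∫ p in S m, g p ∂volume
        ≤ β / η * (volume (cube n cΔ lΔ)).toReal := h
      _ = η⁻¹ * β * (volume (cube n cΔ lΔ)).toReal := by
          rw [div_eq_mul_inv]; ring
  exact le_of_tendsto htendsto (Filter.Eventually.of_forall hbound)
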